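/- Let d ≥ 2 and s ∉ [0, d-2] be integers. The integer distance digraph Γ(ℤ, {1,2,…,d-2,s}) has an efficient dominating set if and only if d = 2 or s ≡ -1 (mod d). -/

import Mathlib

open Filter

/-- Lower density of a set of integers. -/
noncomputable def lowerDensity (D : Set ℤ) : ℝ :=
  Filter.liminf (fun n : ℕ =>
    ((D ∩ Set.Icc (-(n : ℤ)) (n : ℤ)).ncard : ℝ) / (2 * (n : ℝ) + 1)) Filter.atTop

/-- `D` is a dominating set of the integer distance digraph `Γ(ℤ,S)`. -/
def Dominating (S D : Set ℤ) : Prop :=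
  ∀ m : ℤ, m ∈ D ∨ ∃ u ∈ D, ∃ s ∈ S, m = u + s

/-- Domination ratio of `Γ(ℤ,S)`. -/
noncomputable def dominationRatio (S : Set ℤ) : ℝ :=
  sInf (lowerDensity '' {D : Set ℤ | Dominating S D})

/-- `D` is an efficient dominating set of `Γ(ℤ,S)`: every integer is dominated
by exactly one element of `D`. -/
def EffDominating (S D : Set ℤ) : Prop :=
  ∀ m : ℤ, ∃! u, u ∈ D ∧ (u = m ∨ m - u ∈ S)

/-- When `s ≡ -1 (mod d)`, the multiples of `d` form an efficient dominating set. -/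
theorem effdom_multiples (d s : ℤ) (hd : 2 ≤ d) (hsd : d ∣ s + 1) :
    EffDominating (Set.Icc 1 (d - 2) ∪ {s}) {m : ℤ | d ∣ m} := by
  have hd0 : 0 < d := by omega
  have hsmod : s % d = d - 1 := by
    obtain ⟨k, hk⟩ := hsd
    have h1 : s % d = (d - 1) % d := by
      conv_lhs => rw [show s = d - 1 + d * (k - 1) by linarith [hk, mul_sub d k 1]]
      rw [Int.add_mul_emod_self_left]
    rw [h1, Int.emod_eq_of_lt (by omega) (by omega)]
  intro m
  have h1 : 0 ≤ m % d := Int.emod_nonneg m (by omega)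
  have h2 : m % d < d := Int.emod_lt_of_pos m hd0
  have key : ∀ v : ℤ, d ∣ v → (m - v) % d = m % d := by
    intro v hv
    rw [Int.sub_emod, Int.emod_eq_zero_of_dvd hv, sub_zero, Int.emod_emod_of_dvd _ dvd_rfl]
  have hmm : d ∣ m - m % d := Int.dvd_self_sub_of_emod_eq rfl
  rcases lt_trichotomy (m % d) (d - 1) with h | h | h
  · by_cases h0 : m % d = 0
    · refine ⟨m, ⟨by simp only [Set.mem_setOf_eq]; exact Int.dvd_of_emod_eq_zero h0,
        Or.inl rfl⟩, ?_⟩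
      rintro v ⟨hvD, hv⟩
      simp only [Set.mem_setOf_eq] at hvD
      rcases hv with rfl | hv
      · rfl
      · simp only [Set.mem_union, Set.mem_Icc, Set.mem_singleton_iff] at hv
        have hk := key v hvD
        rcases hv with ⟨ha, hb⟩ | hv
        · have := Int.emod_eq_of_lt (a := m - v) (b := d) (by omega) (by omega)
          omega
        · rw [hv, hsmod] at hk; omega
    · refine ⟨m - m % d, ⟨by simpa only [Set.mem_setOf_eq] using hmm, Or.inr ?_⟩, ?_⟩
      · simp only [Set.mem_union, Set.mem_Icc, Set.mem_singleton_iff]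
        left; omega
      · rintro v ⟨hvD, hv⟩
        simp only [Set.mem_setOf_eq] at hvD
        rcases hv with rfl | hv
        · have := Int.emod_eq_zero_of_dvd hvD; omega
        · simp only [Set.mem_union, Set.mem_Icc, Set.mem_singleton_iff] at hv
          have hk := key v hvD
          rcases hv with ⟨ha, hb⟩ | hv
          · have := Int.emod_eq_of_lt (a := m - v) (b := d) (by omega) (by omega)
            omega
          · rw [hv, hsmod] at hk; omega
  · -- m % d = d - 1
    have hms : d ∣ m - s := by
      apply Int.dvd_of_emod_eq_zero
      rw [Int.sub_emod, h, hsmod, sub_self, Int.zero_emod]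
    refine ⟨m - s, ⟨by simpa only [Set.mem_setOf_eq] using hms, Or.inr ?_⟩, ?_⟩
    · simp only [Set.mem_union, Set.mem_Icc, Set.mem_singleton_iff]
      right; omega
    · rintro v ⟨hvD, hv⟩
      simp only [Set.mem_setOf_eq] at hvD
      rcases hv with rfl | hv
      · have := Int.emod_eq_zero_of_dvd hvD; omega
      · simp only [Set.mem_union, Set.mem_Icc, Set.mem_singleton_iff] at hv
        have hk := key v hvD
        rcases hv with ⟨ha, hb⟩ | hv
        · have := Int.emod_eq_of_lt (a := m - v) (b := d) (by omega) (by omega)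
          omega
        · omega
  · omega

/-- For `d = 2` the set `{m : Even (m / s)}` is an efficient dominating set of `Γ(ℤ,{s})`. -/
theorem effdom_single (s : ℤ) (hs : s ≠ 0) :
    EffDominating {s} {m : ℤ | Even (m / s)} := by
  intro m
  have hkey : (m - s) / s = m / s - 1 := by
    have h := Int.add_mul_ediv_right (m - s) 1 hs
    rw [one_mul, sub_add_cancel] at h
    omega
  by_cases hm : Even (m / s)
  · refine ⟨m, ⟨hm, Or.inl rfl⟩, ?_⟩
    rintro v ⟨hvD, hv⟩
    simp only [Set.mem_setOf_eq] at hvD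
    rcases hv with rfl | hv
    · rfl
    · simp only [Set.mem_singleton_iff] at hv
      have hv' : v = m - s := by omega
      rw [hv', hkey] at hvD
      exact absurd hm (Int.even_sub_one.mp hvD)
  · refine ⟨m - s, ⟨by simp only [Set.mem_setOf_eq, hkey]; simpa [Int.even_sub_one] using hm,
      Or.inr (by simp)⟩, ?_⟩
    rintro v ⟨hvD, hv⟩
    simp only [Set.mem_setOf_eq] at hvD
    rcases hv with rfl | hv
    · exact absurd hvD hm
    · simp only [Set.mem_singleton_iff] at hv
      omega

/-- The key forward direction: for `d ≥ 3` an efficient dominating set forces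
`s ≡ -1 (mod d)`. -/
theorem forward_dvd (d s : ℤ) (hd : 3 ≤ d) (hs : s ∉ Set.Icc 0 (d - 2)) (D : Set ℤ)
    (hD : EffDominating (Set.Icc 1 (d - 2) ∪ {s}) D) : d ∣ s + 1 := by
  by_contra hnd
  simp only [Set.mem_Icc, not_and, not_le] at hs
  have memS : ∀ x : ℤ, x ∈ Set.Icc 1 (d - 2) ∪ {s} ↔ (1 ≤ x ∧ x ≤ d - 2) ∨ x = s := by
    intro x
    simp only [Set.mem_union, Set.mem_Icc, Set.mem_singleton_iff]
  -- two elements of D cannot differ by a value in [1, d-2]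
  have mingap : ∀ u ∈ D, ∀ v ∈ D, ¬(1 ≤ v - u ∧ v - u ≤ d - 2) := by
    rintro u hu v hv ⟨hg1, hg2⟩
    obtain ⟨w, _, huniq⟩ := hD v
    have e1 : u = w := huniq u ⟨hu, Or.inr ((memS _).2 (Or.inl ⟨hg1, hg2⟩))⟩
    have e2 : v = w := huniq v ⟨hv, Or.inl rfl⟩
    omega
  -- points u + s - t, 0 ≤ t ≤ d - 2, are never in D
  have hnear : ∀ u ∈ D, ∀ t : ℤ, 0 ≤ t → t ≤ d - 2 → u + s - t ∉ D := by
    intro u hu t ht1 ht2 hw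
    obtain ⟨w, _, huniq⟩ := hD (u + s)
    have e1 : u = w := huniq u ⟨hu, Or.inr ((memS _).2 (Or.inr (by ring)))⟩
    have e2 : u + s - t = w := by
      refine huniq _ ⟨hw, ?_⟩
      rcases eq_or_lt_of_le ht1 with h0 | h0
      · exact Or.inl (by omega)
      · exact Or.inr ((memS _).2 (Or.inl ⟨by omega, by omega⟩))
    omega
  -- D is closed under adding s + 1
  have step1 : ∀ u ∈ D, u + (s + 1) ∈ D := by
    intro u hu
    obtain ⟨w, ⟨hwD, hw⟩, _⟩ := hD (u + s + 1)
    rcases hw with rfl | hw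
    · rwa [show u + (s + 1) = u + s + 1 by ring]
    · rw [memS] at hw
      rcases hw with ⟨hw1, hw2⟩ | hw3
      · exfalso
        refine hnear u hu (u + s - w) (by omega) (by omega) ?_
        rwa [show u + s - (u + s - w) = w by ring]
      · exact absurd ⟨by omega, by omega⟩ (mingap u hu w hwD)
  -- D is closed under adding s + 1 - d
  have step2 : ∀ u ∈ D, u + (s + 1 - d) ∈ D := by
    intro u hu
    obtain ⟨w, ⟨hwD, hw⟩, _⟩ := hD (u + s - 1)
    rcases hw with rfl | hw
    · exact absurd hwD (by
        have := hnear u hu 1 (by omega) (by omega)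
        rwa [show u + s - 1 = u + s - 1 by ring] at this)
    · rw [memS] at hw
      rcases hw with ⟨hw1, hw2⟩ | hw3
      · by_cases hcase : u + s - w ≤ d - 2
        · exfalso
          refine hnear u hu (u + s - w) (by omega) hcase ?_
          rwa [show u + s - (u + s - w) = w by ring]
        · rwa [show u + (s + 1 - d) = w by omega]
      · exact absurd ⟨by omega, by omega⟩ (mingap w hwD u hu)
  obtain ⟨u0, ⟨hu0, _⟩, _⟩ := hD 0
  -- closure under nonnegative combinations
  have closN : ∀ j i : ℕ, u0 + (i : ℤ) * (s + 1) + (j : ℤ) * (s + 1 - d) ∈ D := by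
    intro j
    induction j with
    | zero =>
      intro i
      induction i with
      | zero => simpa using hu0
      | succ n ih =>
        have h := step1 _ ih
        rwa [show u0 + (n : ℤ) * (s + 1) + ((0 : ℕ) : ℤ) * (s + 1 - d) + (s + 1)
            = u0 + ((n + 1 : ℕ) : ℤ) * (s + 1) + ((0 : ℕ) : ℤ) * (s + 1 - d) by
          push_cast; ring] at h
    | succ n ih =>
      intro i
      have h := step2 _ (ih i)
      rwa [show u0 + (i : ℤ) * (s + 1) + (n : ℤ) * (s + 1 - d) + (s + 1 - d)
          = u0 + (i : ℤ) * (s + 1) + ((n + 1 : ℕ) : ℤ) * (s + 1 - d) by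
        push_cast; ring] at h
  -- gcd argument
  set a : ℤ := s + 1 with ha
  set b : ℤ := s + 1 - d with hb
  set g : ℤ := (Int.gcd a d : ℤ) with hg
  have hg_dvd_a : g ∣ a := Int.gcd_dvd_left a d
  have hg_dvd_d : g ∣ d := Int.gcd_dvd_right a d
  have hg_pos : 1 ≤ g := by
    have hne : Int.gcd a d ≠ 0 := by
      intro h0
      have := (Int.gcd_eq_zero_iff.mp h0).2
      omega
    omega
  have hg_ne_d : g ≠ d := fun h => hnd (h ▸ hg_dvd_a)
  have hg_le : g ≤ d - 2 := by
    have hle : g ≤ d := Int.le_of_dvd (by omega) hg_dvd_d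
    by_contra hcon
    have hgd1 : g = d - 1 := by omega
    have hdd : (d - 1 : ℤ) ∣ d := hgd1 ▸ hg_dvd_d
    have hone : (d - 1 : ℤ) ∣ 1 := by
      have h2 := dvd_sub hdd (dvd_refl (d - 1))
      rwa [show d - (d - 1) = 1 by ring] at h2
    have := Int.le_of_dvd one_pos hone
    omega
  obtain ⟨x, y, hxy⟩ : ∃ x y : ℤ, g = a * x + d * y :=
    ⟨Int.gcdA a d, Int.gcdB a d, Int.gcd_eq_gcd_ab a d⟩
  set P : ℤ := x + y with hP
  set Q : ℤ := -y with hQ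
  have hPQ : g = P * a + Q * b := by
    rw [hxy, hP, hQ, hb, ha]; ring
  set n : ℕ := P.natAbs + Q.natAbs with hn
  have hnP : 0 ≤ (n : ℤ) + P := by omega
  have hnQ : 0 ≤ (n : ℤ) + Q := by omega
  have h1 : u0 + (n : ℤ) * a + (n : ℤ) * b ∈ D := closN n n
  have h2 : u0 + ((n : ℤ) + P) * a + ((n : ℤ) + Q) * b ∈ D := by
    have h := closN ((n : ℤ) + Q).toNat ((n : ℤ) + P).toNat
    rwa [Int.toNat_of_nonneg hnP, Int.toNat_of_nonneg hnQ] at h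
  have hdiff := mingap _ h1 _ h2
  apply hdiff
  have heq : (u0 + ((n : ℤ) + P) * a + ((n : ℤ) + Q) * b)
      - (u0 + (n : ℤ) * a + (n : ℤ) * b) = g := by
    rw [hPQ]; ring
  constructor <;> omega

theorem stmt_17 (d s : ℤ) (hd : 2 ≤ d) (hs : s ∉ Set.Icc 0 (d - 2)) :
    (∃ D : Set ℤ, EffDominating (Set.Icc 1 (d - 2) ∪ {s}) D) ↔
      d = 2 ∨ s ≡ -1 [ZMOD d] := by
  constructor
  · rintro ⟨D, hD⟩
    by_cases h2 : d = 2
    · exact Or.inl h2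
    · right
      have hdvd : d ∣ s + 1 := forward_dvd d s (by omega) hs D hD
      obtain ⟨k, hk⟩ := hdvd
      have hdvd' : d ∣ -1 - s := ⟨-k, by rw [mul_neg, ← hk]; ring⟩
      exact Int.modEq_iff_dvd.mpr hdvd'
  · rintro (rfl | h)
    · refine ⟨{m : ℤ | Even (m / s)}, ?_⟩
      have hsne : s ≠ 0 := by
        intro h0
        exact hs (by simp [Set.mem_Icc, h0])
      have hset : Set.Icc (1 : ℤ) (2 - 2) ∪ {s} = ({s} : Set ℤ) := by
        rw [Set.Icc_eq_empty (by norm_num), Set.empty_union]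
      rw [hset]
      exact effdom_single s hsne
    · have hdvd : d ∣ s + 1 := by
        obtain ⟨k, hk⟩ := Int.modEq_iff_dvd.mp h
        exact ⟨-k, by rw [mul_neg, ← hk]; ring⟩
      exact ⟨_, effdom_multiples d s hd hdvd⟩
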